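/- The property FAb (every finite index subgroup has finite abelianization) is inherited by groups with isomorphic profinite completions: if $\Gamma_1, \Gamma_2$ are finitely generated residually finite groups with $\hat{\Gamma}_1 \cong \hat{\Gamma}_2$ and every finite-index subgroup of $\Gamma_1$ has finite abelianization, then the same holds for $\Gamma_2$. -/

import Mathlib

/-- The finite-index normal subgroups of `G`. -/
def FinIndexNormal (G : Type*) [Group G] : Type _ :=
  {N : Subgroup G // N.Normal ∧ N.FiniteIndex}

instance {G : Type*} [Group G] (N : FinIndexNormal G) : N.1.Normal := N.2.1
instance {G : Type*} [Group G] (N : FinIndexNormal G) : N.1.FiniteIndex := N.2.2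

/-- Transition map between two finite quotients of `G`. -/
def transMap {G : Type*} [Group G] {N M : FinIndexNormal G} (h : N.1 ≤ M.1) :
    G ⧸ N.1 →* G ⧸ M.1 :=
  QuotientGroup.map N.1 M.1 (MonoidHom.id G) (by simpa using h)

/-- The profinite completion of `G`: the inverse limit of the system of finite
quotients `G ⧸ N` over the finite-index normal subgroups `N` of `G`, realized as
the subgroup of compatible tuples in the product of all the finite quotients. -/
def profiniteCompletion (G : Type*) [Group G] :
    Subgroup (∀ N : FinIndexNormal G, G ⧸ N.1) where
  carrier := {x | ∀ (N M : FinIndexNormal G) (h : N.1 ≤ M.1), transMap h (x N) = x M}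
  one_mem' := by intro N M h; simp
  mul_mem' := by
    intro a b ha hb N M h
    simp only [Pi.mul_apply, map_mul, ha N M h, hb N M h]
  inv_mem' := by
    intro a ha N M h
    simp only [Pi.inv_apply, map_inv, ha N M h]

/-- The canonical map from `G` to its profinite completion. -/
def toProfiniteCompletion (G : Type*) [Group G] : G →* profiniteCompletion G where
  toFun g := ⟨fun N => QuotientGroup.mk g, fun _ _ _ => rfl⟩
  map_one' := rfl
  map_mul' _ _ := rfl

/-- Each finite quotient carries the discrete topology. -/
instance {G : Type*} [Group G] (N : FinIndexNormal G) : TopologicalSpace (G ⧸ N.1) := ⊥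

/-- A group has FAb if every finite-index subgroup has finite abelianization. -/
def FAb (Γ : Type*) [Group Γ] : Prop :=
  ∀ Δ : Subgroup Γ, Δ.FiniteIndex → Finite (Abelianization Δ)

section Aux

variable {G : Type*} [Group G]

instance (N : FinIndexNormal G) : DiscreteTopology (G ⧸ N.1) := ⟨rfl⟩

theorem normal_iInf' {ι : Sort*} {f : ι → Subgroup G} (h : ∀ i, (f i).Normal) :
    (⨅ i, f i).Normal :=
  ⟨fun x hx g => Subgroup.mem_iInf.mpr fun i => (h i).conj_mem _ (Subgroup.mem_iInf.mp hx i) g⟩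

theorem transMap_mk {N M : FinIndexNormal G} (h : N.1 ≤ M.1) (g : G) :
    transMap h (QuotientGroup.mk g) = QuotientGroup.mk g := rfl

theorem nbhd_lemma (U : Set (profiniteCompletion G)) (hU : IsOpen U)
    (x : profiniteCompletion G) (hx : x ∈ U) :
    ∃ M : FinIndexNormal G, ∀ z : profiniteCompletion G, z.1 M = x.1 M → z ∈ U := by
  obtain ⟨V, hV, rfl⟩ := isOpen_induced_iff.mp hU
  obtain ⟨I, u, hu, hpi⟩ := (isOpen_pi_iff.mp hV) x.1 hx
  have hnorm : (⨅ i ∈ I, i.1).Normal := by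
    refine normal_iInf' fun i => normal_iInf' fun _ => i.2.1
  have hfi : (⨅ i ∈ I, i.1).FiniteIndex :=
    Subgroup.finiteIndex_iInf' _ fun i _ => i.2.2
  refine ⟨⟨⨅ i ∈ I, i.1, hnorm, hfi⟩, fun z hz => ?_⟩
  refine hpi ?_
  intro i hi
  have hle : (⟨⨅ i ∈ I, i.1, hnorm, hfi⟩ : FinIndexNormal G).1 ≤ i.1 := iInf₂_le i hi
  have h1 := z.2 _ i hle
  have h2 := x.2 _ i hle
  have : z.1 i = x.1 i := by rw [← h1, ← h2, hz]
  rw [this]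
  exact (hu i hi).2

theorem exists_surj_toZMod (A : Type*) [AddCommGroup A] [AddGroup.FG A] (hA : Infinite A)
    (n : ℕ) : ∃ f : A →+ ZMod n, Function.Surjective f := by
  obtain ⟨k, ι, fι, p, hp, ex, ⟨φ⟩⟩ := AddCommGroup.equiv_free_prod_directSum_zmod A
  haveI : ∀ i, NeZero (p i ^ ex i) := fun i => ⟨pow_ne_zero _ (hp i).ne_zero⟩
  rcases Nat.eq_zero_or_pos k with hk | hk
  · subst hk
    haveI : Finite ((Fin 0 →₀ ℤ) × DirectSum ι fun i => ZMod (p i ^ ex i)) := by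
      have e2 : DirectSum ι (fun i => ZMod (p i ^ ex i)) = (Π₀ i, ZMod (p i ^ ex i)) := rfl
      classical
      rw [e2] at *
      infer_instance
    exact absurd (Finite.of_equiv _ φ.toEquiv.symm) (not_finite_iff_infinite.mpr hA)
  · refine ⟨(((Int.castAddHom (ZMod n)).comp
      (Finsupp.applyAddHom (⟨0, hk⟩ : Fin k))).comp
      (AddMonoidHom.fst _ _)).comp φ.toAddMonoidHom, ?_⟩
    intro q
    obtain ⟨z, hz⟩ := ZMod.intCast_surjective (n := n) q
    refine ⟨φ.symm (Finsupp.single ⟨0, hk⟩ z, 0), ?_⟩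
    simp [hz, Finsupp.single_eq_same]

theorem exists_surj_zmod_mul (A : Type*) [CommGroup A] [Group.FG A] (hA : Infinite A)
    (n : ℕ) : ∃ f : A →* Multiplicative (ZMod n), Function.Surjective f := by
  haveI : Infinite (Additive A) := Additive.ofMul.infinite_iff.mp hA
  obtain ⟨φ, hφ⟩ := exists_surj_toZMod (Additive A) inferInstance n
  refine ⟨{ toFun := fun a => Multiplicative.ofAdd (φ (Additive.ofMul a)),
            map_one' := by simp,
            map_mul' := by intro a b; simp [← ofAdd_add] }, fun q => ?_⟩
  obtain ⟨a, ha⟩ := hφ (Multiplicative.toAdd q)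
  exact ⟨Additive.toMul a, by simp [ha]⟩

end Aux

/-- FAb is a profinite property: if two finitely generated residually finite groups
have isomorphic profinite completions (as topological groups) and the first has FAb,
so does the second. -/
theorem fab_profinite_property (Γ₁ Γ₂ : Type*) [Group Γ₁] [Group Γ₂]
    (h₁ : Group.FG Γ₁) (h₂ : Group.FG Γ₂)
    (hres₁ : Function.Injective (toProfiniteCompletion Γ₁))
    (hres₂ : Function.Injective (toProfiniteCompletion Γ₂))
    (e : profiniteCompletion Γ₁ ≃* profiniteCompletion Γ₂)
    (he : Continuous e) (he' : Continuous e.symm)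
    (hfab : FAb Γ₁) : FAb Γ₂ := by
  intro Δ hΔ
  haveI := hΔ
  haveI : Group.FG Δ := Subgroup.fg_of_index_ne_zero Δ
  by_contra hfin
  rw [not_finite_iff_infinite] at hfin
  set ι₁ := toProfiniteCompletion Γ₁ with hι₁
  set ι₂ := toProfiniteCompletion Γ₂ with hι₂
  -- the canonical finite-index normal subgroup inside Δ
  obtain ⟨N₀, hN₀⟩ : ∃ N₀ : FinIndexNormal Γ₂, N₀.1 = Δ.normalCore :=
    ⟨⟨Δ.normalCore, inferInstance, inferInstance⟩, rfl⟩
  have hN₀le : N₀.1 ≤ Δ := hN₀ ▸ Subgroup.normalCore_le Δ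
  set P₀ : Subgroup (Γ₂ ⧸ N₀.1) := Δ.map (QuotientGroup.mk' N₀.1) with hP₀
  -- the corresponding subgroup of Γ₁
  set Δ₁ : Subgroup Γ₁ :=
    P₀.comap ((((Pi.evalMonoidHom _ N₀).comp
      (profiniteCompletion Γ₂).subtype).comp e.toMonoidHom).comp ι₁) with hΔ₁def
  have hΔ₁mem : ∀ g : Γ₁, g ∈ Δ₁ ↔ ((e (ι₁ g)) : ∀ N : FinIndexNormal Γ₂, Γ₂ ⧸ N.1) N₀ ∈ P₀ :=
    fun g => Iff.rfl
  -- Δ₁ has finite index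
  have hU₀open : IsOpen {w : profiniteCompletion Γ₁ |
      ((e w) : ∀ N : FinIndexNormal Γ₂, Γ₂ ⧸ N.1) N₀ ∈ P₀} := by
    have hc : Continuous fun w : profiniteCompletion Γ₁ =>
        ((e w) : ∀ N : FinIndexNormal Γ₂, Γ₂ ⧸ N.1) N₀ :=
      ((continuous_apply N₀).comp continuous_subtype_val).comp he
    exact hc.isOpen_preimage _ (isOpen_discrete _)
  have h1U : (1 : profiniteCompletion Γ₁) ∈ {w : profiniteCompletion Γ₁ |
      ((e w) : ∀ N : FinIndexNormal Γ₂, Γ₂ ⧸ N.1) N₀ ∈ P₀} := by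
    have h0 : ((e 1 : profiniteCompletion Γ₂) : ∀ N : FinIndexNormal Γ₂, Γ₂ ⧸ N.1) N₀
        = (1 : Γ₂ ⧸ N₀.1) := by rw [map_one]; rfl
    show ((e 1 : profiniteCompletion Γ₂) : ∀ N : FinIndexNormal Γ₂, Γ₂ ⧸ N.1) N₀ ∈ P₀
    rw [h0]
    exact ⟨1, Δ.one_mem, map_one _⟩
  obtain ⟨M₁, hM₁⟩ := nbhd_lemma _ hU₀open 1 h1U
  have hM₁le : M₁.1 ≤ Δ₁ := by
    intro g hg
    have : (ι₁ g).1 M₁ = (1 : profiniteCompletion Γ₁).1 M₁ := by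
      show (QuotientGroup.mk g : Γ₁ ⧸ M₁.1) = _
      rw [(QuotientGroup.eq_one_iff g).mpr hg]
      rfl
    exact hM₁ (ι₁ g) this
  haveI hΔ₁fi : Δ₁.FiniteIndex := Subgroup.finiteIndex_of_le hM₁le
  haveI hfin₁ : Finite (Abelianization Δ₁) := hfab Δ₁ hΔ₁fi
  -- choose a surjection of Δ onto a large finite cyclic group
  set m : ℕ := Nat.card (Abelianization Δ₁) + 1 with hm
  haveI : NeZero m := ⟨Nat.succ_ne_zero _⟩
  have hofsurj : Function.Surjective (Abelianization.of (G := Δ)) := fun a =>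
    Quotient.inductionOn' a fun g => ⟨g, rfl⟩
  haveI : Group.FG (Abelianization Δ) := Group.fg_of_surjective hofsurj
  obtain ⟨α, hα⟩ := exists_surj_zmod_mul (Abelianization Δ) hfin m
  set f : Δ →* Multiplicative (ZMod m) := α.comp Abelianization.of with hf
  have hfsurj : Function.Surjective f := fun q => by
    obtain ⟨a, ha⟩ := hα q
    obtain ⟨d, rfl⟩ := hofsurj a
    exact ⟨d, ha⟩
  -- the kernel data
  set K : Subgroup Γ₂ := f.ker.map Δ.subtype with hK
  have hKle : K ≤ Δ := by
    rintro x ⟨d, _, rfl⟩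
    exact d.2
  haveI : Finite (Multiplicative (ZMod m)) := inferInstance
  haveI : Finite f.range := inferInstance
  haveI hKfi : K.FiniteIndex := by
    constructor
    have h := Subgroup.relIndex_mul_index hKle
    rw [Subgroup.relIndex, Subgroup.subgroupOf, hK,
      Subgroup.comap_map_eq_self_of_injective Δ.subtype_injective] at h
    rw [← h]
    exact Nat.mul_ne_zero (Subgroup.finiteIndex_ker f).index_ne_zero hΔ.index_ne_zero
  obtain ⟨N, hN⟩ : ∃ N : FinIndexNormal Γ₂, N.1 = K.normalCore :=
    ⟨⟨K.normalCore, inferInstance, inferInstance⟩, rfl⟩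
  have hNle : N.1 ≤ Δ := hN ▸ (K.normalCore_le).trans hKle
  set π : Δ →* Γ₂ ⧸ N.1 := (QuotientGroup.mk' N.1).comp Δ.subtype with hπ
  have hkerπ : π.ker ≤ f.ker := by
    intro d hd
    have h1 : (d : Γ₂) ∈ N.1 := by
      rw [MonoidHom.mem_ker] at hd
      exact (QuotientGroup.eq_one_iff _).mp hd
    rw [hN] at h1
    obtain ⟨x, hx, hxd⟩ := K.normalCore_le h1
    have : x = d := Subtype.ext hxd
    rwa [this] at hx
  set ψ0 : Δ ⧸ π.ker →* Multiplicative (ZMod m) :=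
    QuotientGroup.lift π.ker f (fun x hx => MonoidHom.mem_ker.mp (hkerπ hx)) with hψ0
  set ψ : π.range →* Multiplicative (ZMod m) :=
    ψ0.comp (QuotientGroup.quotientKerEquivRange π).symm.toMonoidHom with hψdef
  have hψ : ∀ (d : Δ) (hd : QuotientGroup.mk (d : Γ₂) ∈ π.range),
      ψ ⟨QuotientGroup.mk (d : Γ₂), hd⟩ = f d := by
    intro d hd
    have h1 : (QuotientGroup.quotientKerEquivRange π).symm ⟨QuotientGroup.mk (d : Γ₂), hd⟩
        = QuotientGroup.mk d := by
      rw [MulEquiv.symm_apply_eq]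
      rfl
    show ψ0 ((QuotientGroup.quotientKerEquivRange π).symm ⟨QuotientGroup.mk (d : Γ₂), hd⟩)
      = f d
    rw [h1]
    rfl
  obtain ⟨M, hM⟩ : ∃ M : FinIndexNormal Γ₂, M.1 = N₀.1 ⊓ N.1 :=
    ⟨⟨N₀.1 ⊓ N.1, inferInstance, inferInstance⟩, rfl⟩
  have hMN₀ : M.1 ≤ N₀.1 := hM ▸ inf_le_left
  have hMN : M.1 ≤ N.1 := hM ▸ inf_le_right
  -- membership of the key coordinate
  have hmem : ∀ g : Γ₁, g ∈ Δ₁ →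
      ((e (ι₁ g)) : ∀ N : FinIndexNormal Γ₂, Γ₂ ⧸ N.1) N ∈ π.range := by
    intro g hg
    set z := e (ι₁ g) with hz
    have hgP : z.1 N₀ ∈ P₀ := (hΔ₁mem g).mp hg
    obtain ⟨h, hh⟩ := QuotientGroup.mk'_surjective M.1 (z.1 M)
    have t0 : z.1 N₀ = QuotientGroup.mk h := by
      rw [← z.2 M N₀ hMN₀, ← hh]
      rfl
    rw [t0] at hgP
    obtain ⟨d, hdΔ, hdh⟩ := hgP
    have hdN₀ : d⁻¹ * h ∈ N₀.1 := by
      rw [← QuotientGroup.eq]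
      exact hdh
    have hhΔ : h ∈ Δ := by
      have hdh2 : h = d * (d⁻¹ * h) := by group
      rw [hdh2]
      exact Δ.mul_mem hdΔ (hN₀le hdN₀)
    have tN : z.1 N = QuotientGroup.mk h := by
      rw [← z.2 M N hMN, ← hh]
      rfl
    rw [tN]
    exact ⟨⟨h, hhΔ⟩, rfl⟩
  -- the transported homomorphism
  set θ : Δ₁ →* Γ₂ ⧸ N.1 :=
    ((((Pi.evalMonoidHom _ N).comp (profiniteCompletion Γ₂).subtype).comp
      e.toMonoidHom).comp ι₁).comp Δ₁.subtype with hθdef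
  set ρ : Δ₁ →* Multiplicative (ZMod m) :=
    ψ.comp (θ.codRestrict π.range (fun g => hmem g.1 g.2)) with hρ
  have hρsurj : Function.Surjective ρ := by
    intro q
    obtain ⟨d, hd⟩ := hfsurj q
    have hUopen : IsOpen {w : profiniteCompletion Γ₁ |
        ((e w) : ∀ N : FinIndexNormal Γ₂, Γ₂ ⧸ N.1) M = QuotientGroup.mk (d : Γ₂)} := by
      have hc : Continuous fun w : profiniteCompletion Γ₁ =>
          ((e w) : ∀ N : FinIndexNormal Γ₂, Γ₂ ⧸ N.1) M :=
        ((continuous_apply M).comp continuous_subtype_val).comp he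
      exact hc.isOpen_preimage {QuotientGroup.mk (d : Γ₂)} (isOpen_discrete _)
    have hxU : e.symm (ι₂ (d : Γ₂)) ∈ {w : profiniteCompletion Γ₁ |
        ((e w) : ∀ N : FinIndexNormal Γ₂, Γ₂ ⧸ N.1) M = QuotientGroup.mk (d : Γ₂)} := by
      show ((e (e.symm (ι₂ (d : Γ₂)))) : ∀ N : FinIndexNormal Γ₂, Γ₂ ⧸ N.1) M = _
      rw [MulEquiv.apply_symm_apply]
      rfl
    obtain ⟨M', hM'⟩ := nbhd_lemma _ hUopen _ hxU
    obtain ⟨g, hg⟩ := QuotientGroup.mk'_surjective M'.1 ((e.symm (ι₂ (d : Γ₂))).1 M')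
    have hgM : ((e (ι₁ g)) : ∀ N : FinIndexNormal Γ₂, Γ₂ ⧸ N.1) M
        = QuotientGroup.mk (d : Γ₂) := hM' (ι₁ g) hg
    have hgN₀ : ((e (ι₁ g)) : ∀ N : FinIndexNormal Γ₂, Γ₂ ⧸ N.1) N₀
        = QuotientGroup.mk (d : Γ₂) := by
      rw [← (e (ι₁ g)).2 M N₀ hMN₀, hgM]
      rfl
    have hgN : ((e (ι₁ g)) : ∀ N : FinIndexNormal Γ₂, Γ₂ ⧸ N.1) N
        = QuotientGroup.mk (d : Γ₂) := by
      rw [← (e (ι₁ g)).2 M N hMN, hgM]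
      rfl
    have hgΔ₁ : g ∈ Δ₁ := by
      rw [hΔ₁mem, hgN₀]
      exact ⟨(d : Γ₂), d.2, rfl⟩
    refine ⟨⟨g, hgΔ₁⟩, ?_⟩
    show ψ ⟨θ ⟨g, hgΔ₁⟩, _⟩ = q
    have hθg : θ ⟨g, hgΔ₁⟩ = QuotientGroup.mk (d : Γ₂) := hgN
    have hsub : (⟨θ ⟨g, hgΔ₁⟩, hmem g hgΔ₁⟩ : π.range)
        = ⟨QuotientGroup.mk (d : Γ₂), hθg ▸ hmem g hgΔ₁⟩ := Subtype.ext hθg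
    rw [hsub, hψ d _]
    exact hd
  -- conclude by a cardinality contradiction
  have habs : Function.Surjective (Abelianization.lift ρ) := by
    intro q
    obtain ⟨x, hx⟩ := hρsurj q
    exact ⟨Abelianization.of x, by simpa using hx⟩
  have hcard : Nat.card (Multiplicative (ZMod m)) ≤ Nat.card (Abelianization Δ₁) :=
    Nat.card_le_card_of_surjective _ habs
  rw [Nat.card_congr (Multiplicative.toAdd (α := ZMod m)), Nat.card_zmod] at hcard
  omega
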